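/- Let n ≥ 1, ρ > 0, and f ∈ C[0,1]. Then there exist points 0 = t₀ < t₁ < … < t_n = 1 such that f(t_i) − L_n^ρ f(t_i) = 0 for all i = 0,1,…,n. -/

import Mathlib

open MeasureTheory

/-- Euler Beta function `B(a,b) = ∫₀¹ t^(a-1) (1-t)^(b-1) dt`. -/
noncomputable def betaFn (a b : ℝ) : ℝ :=
  ∫ t in (0:ℝ)..1, t ^ (a - 1) * (1 - t) ^ (b - 1)

/-- The functionals `F_{n,k}^ρ`. -/
noncomputable def Ffun (n k : ℕ) (ρ : ℝ) (f : ℝ → ℝ) : ℝ :=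
  if k = 0 then f 0
  else if k = n then f 1
  else (betaFn ((k : ℝ) * ρ) (((n : ℝ) - (k : ℝ)) * ρ))⁻¹ *
    ∫ t in (0:ℝ)..1, t ^ ((k : ℝ) * ρ - 1) * (1 - t) ^ (((n : ℝ) - (k : ℝ)) * ρ - 1) * f t

/-- Bernstein basis polynomial `p_{n,k}(x)`. -/
noncomputable def bern (n k : ℕ) (x : ℝ) : ℝ :=
  (n.choose k : ℝ) * x ^ k * (1 - x) ^ (n - k)

/-- The operator `U_n^ρ`. -/
noncomputable def Uop (n : ℕ) (ρ : ℝ) (f : ℝ → ℝ) (x : ℝ) : ℝ :=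
  ∑ k ∈ Finset.range (n + 1), Ffun n k ρ f * bern n k x

open Set intervalIntegral Polynomial

section aux

lemma aux_base_integrable {a b : ℝ} (ha : 0 < a) (hb : 0 < b) :
    IntervalIntegrable (fun t : ℝ => t ^ (a-1) * (1-t) ^ (b-1)) volume 0 1 := by
  have hC : IntervalIntegrable (fun x : ℝ => (x:ℂ) ^ ((a:ℂ) - 1) * ((1:ℂ) - (x:ℂ)) ^ ((b:ℂ) - 1))
      volume 0 1 := Complex.betaIntegral_convergent (by simpa using ha) (by simpa using hb)
  rw [intervalIntegrable_iff_integrableOn_Ioc_of_le (by norm_num)] at hC ⊢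
  have h2 : IntegrableOn (fun x : ℝ => (((x:ℂ) ^ ((a:ℂ) - 1) * ((1:ℂ) - (x:ℂ)) ^ ((b:ℂ) - 1)).re)) (Ioc 0 1) volume := hC.re
  refine h2.congr_fun ?_ measurableSet_Ioc
  intro x hx
  have hx0 : (0:ℝ) ≤ x := le_of_lt hx.1
  have hx1 : (0:ℝ) ≤ 1 - x := by linarith [hx.2]
  have e1 : ((x:ℂ)) ^ ((a:ℂ) - 1) = ((x ^ (a-1) : ℝ) : ℂ) := by
    rw [Complex.ofReal_cpow hx0]; push_cast; ring_nf
  have e2 : ((1:ℂ) - (x:ℂ)) ^ ((b:ℂ) - 1) = (((1-x) ^ (b-1) : ℝ) : ℂ) := by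
    rw [show ((1:ℂ) - (x:ℂ)) = (((1:ℝ)-x : ℝ) : ℂ) by push_cast; ring,
      Complex.ofReal_cpow hx1]
    push_cast; ring_nf
  simp [Complex.ofReal_mul, e1, e2, ← Complex.ofReal_mul]


lemma aux_mul_integrable {a b : ℝ} (ha : 0 < a) (hb : 0 < b) {h : ℝ → ℝ}
    (hh : ContinuousOn h (Icc 0 1)) :
    IntervalIntegrable (fun t : ℝ => t ^ (a-1) * (1-t) ^ (b-1) * h t) volume 0 1 := by
  obtain ⟨M, hM⟩ : ∃ M, ∀ x ∈ Icc (0:ℝ) 1, ‖h x‖ ≤ M :=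
    isCompact_Icc.exists_bound_of_continuousOn hh
  have hbase := aux_base_integrable ha hb
  rw [intervalIntegrable_iff_integrableOn_Ioc_of_le (by norm_num),
    integrableOn_Ioc_iff_integrableOn_Ioo] at hbase ⊢
  have hg : IntegrableOn (fun t : ℝ => M * (t ^ (a-1) * (1-t) ^ (b-1))) (Ioo 0 1) volume :=
    hbase.const_mul M
  have hmeas : AEStronglyMeasurable (fun t : ℝ => t ^ (a-1) * (1-t) ^ (b-1) * h t)
      ((volume : Measure ℝ).restrict (Ioo 0 1)) := by
    apply ContinuousOn.aestronglyMeasurable ?_ measurableSet_Ioo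
    apply ContinuousOn.mul
    · apply ContinuousOn.mul
      · exact fun x hx => (Real.continuousAt_rpow_const x (a-1) (Or.inl (ne_of_gt hx.1))).continuousWithinAt
      · apply ContinuousOn.rpow_const (by fun_prop)
        intro x hx
        exact Or.inl (by intro hc; have := sub_eq_zero.mp hc; linarith [hx.2])
    · exact hh.mono (fun x hx => ⟨le_of_lt hx.1, le_of_lt hx.2⟩)
  refine hg.mono' hmeas ?_
  filter_upwards [ae_restrict_mem measurableSet_Ioo] with x hx
  have h1 : 0 ≤ x ^ (a-1) := Real.rpow_nonneg (le_of_lt hx.1) _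
  have h2 : 0 ≤ (1-x) ^ (b-1) := Real.rpow_nonneg (by linarith [hx.2.le]) _
  have h3 : ‖h x‖ ≤ M := hM x ⟨le_of_lt hx.1, hx.2.le⟩
  have : ‖x ^ (a-1) * (1-x) ^ (b-1) * h x‖ = x ^ (a-1) * (1-x) ^ (b-1) * ‖h x‖ := by
    rw [norm_mul, Real.norm_of_nonneg (mul_nonneg h1 h2)]
  rw [this]
  calc x ^ (a-1) * (1-x) ^ (b-1) * ‖h x‖ ≤ x ^ (a-1) * (1-x) ^ (b-1) * M := by
        apply mul_le_mul_of_nonneg_left h3 (mul_nonneg h1 h2)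
    _ = M * (x ^ (a-1) * (1-x) ^ (b-1)) := by ring

lemma betaFn_pos {a b : ℝ} (ha : 0 < a) (hb : 0 < b) : 0 < betaFn a b := by
  apply intervalIntegral_pos_of_pos_on (aux_base_integrable ha hb) _ (by norm_num)
  intro x hx
  exact mul_pos (Real.rpow_pos_of_pos hx.1 _) (Real.rpow_pos_of_pos (by linarith [hx.2]) _)

lemma aux_orth (n : ℕ) (ρ : ℝ) (hρ : 0 < ρ)
    (f : ℝ → ℝ) (hf : ContinuousOn f (Icc 0 1)) (L : Polynomial ℝ)
    (hL : ∀ k ≤ n, Ffun n k ρ (fun x => L.eval x) = Ffun n k ρ f)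
    (k : ℕ) (hk1 : 1 ≤ k) (hk2 : k < n) :
    ∫ t in (0:ℝ)..1, t ^ ((k:ℝ)*ρ-1) * (1-t) ^ (((n:ℝ)-(k:ℝ))*ρ-1) * (f t - L.eval t) = 0 := by
  have hk0 : k ≠ 0 := by omega
  have hkn : k ≠ n := by omega
  have hka : (0:ℝ) < (k:ℝ) * ρ := by positivity
  have hkb : (0:ℝ) < ((n:ℝ)-(k:ℝ)) * ρ := by
    apply mul_pos _ hρ
    have : (k:ℝ) < (n:ℝ) := by exact_mod_cast hk2
    linarith
  have h := hL k (le_of_lt hk2)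
  rw [Ffun, Ffun, if_neg hk0, if_neg hk0, if_neg hkn, if_neg hkn] at h
  have hβ : (betaFn ((k:ℝ)*ρ) (((n:ℝ)-(k:ℝ))*ρ))⁻¹ ≠ 0 :=
    inv_ne_zero (ne_of_gt (betaFn_pos hka hkb))
  have h2 := mul_left_cancel₀ hβ h
  have hiL := aux_mul_integrable hka hkb (L.continuous.continuousOn (s := Icc 0 1))
  have hif := aux_mul_integrable hka hkb hf
  have : (∫ t in (0:ℝ)..1, t ^ ((k:ℝ)*ρ-1) * (1-t) ^ (((n:ℝ)-(k:ℝ))*ρ-1) * (f t - L.eval t))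
      = (∫ t in (0:ℝ)..1, t ^ ((k:ℝ)*ρ-1) * (1-t) ^ (((n:ℝ)-(k:ℝ))*ρ-1) * f t)
      - ∫ t in (0:ℝ)..1, t ^ ((k:ℝ)*ρ-1) * (1-t) ^ (((n:ℝ)-(k:ℝ))*ρ-1) * L.eval t := by
    rw [← intervalIntegral.integral_sub hif hiL]
    congr 1; funext t; ring
  rw [this, h2, sub_self]


lemma assemble (n : ℕ) (hn : 1 ≤ n) (g : ℝ → ℝ) (hg0 : g 0 = 0) (hg1 : g 1 = 0)
    (s : Finset ℝ) (hs : ↑s ⊆ Ioo (0:ℝ) 1) (hcard : s.card = n - 1)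
    (hz : ∀ x ∈ s, g x = 0) :
    ∃ t : Fin (n+1) → ℝ, StrictMono t ∧ t 0 = 0 ∧ t (Fin.last n) = 1 ∧ ∀ i, g (t i) = 0 := by
  set oi := s.orderIsoOfFin hcard with hoi
  set T : Fin (n+1) → ℝ := fun i =>
    if h : (i:ℕ) = 0 then 0 else if h2 : (i:ℕ) = n then 1
    else (oi ⟨(i:ℕ) - 1, by omega⟩ : ℝ) with hT
  have hmem : ∀ (j : Fin (n-1)), (oi j : ℝ) ∈ Ioo (0:ℝ) 1 := fun j => hs (oi j).2
  have hTval : ∀ i : Fin (n+1), (i:ℕ) ≠ 0 → (i:ℕ) ≠ n → T i ∈ Ioo (0:ℝ) 1 := by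
    intro i h1 h2
    simp only [hT, dif_neg h1, dif_neg h2]
    exact hmem _
  refine ⟨T, ?_, by simp [hT], by simp [hT]; omega, ?_⟩
  · intro i j hij
    have hij' : (i:ℕ) < (j:ℕ) := hij
    have hjn : (j:ℕ) ≤ n := by omega
    by_cases hi0 : (i:ℕ) = 0
    · have hj0 : (j:ℕ) ≠ 0 := by omega
      have : T i = 0 := by simp only [hT, dif_pos hi0]
      rw [this]
      by_cases hjn' : (j:ℕ) = n
      · have hn0 : ¬ (n = 0) := by omega
        simp only [hT, dif_neg hj0, dif_pos hjn']; norm_num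
      · exact (hTval j hj0 hjn').1
    · have hin : (i:ℕ) ≠ n := by omega
      by_cases hjn' : (j:ℕ) = n
      · have : T j = 1 := by simp only [hT, dif_neg (show (j:ℕ) ≠ 0 by omega), dif_pos hjn']
        rw [this]
        exact (hTval i hi0 hin).2
      · have hj0 : (j:ℕ) ≠ 0 := by omega
        simp only [hT, dif_neg hi0, dif_neg hin, dif_neg hj0, dif_neg hjn']
        rw [Subtype.coe_lt_coe]
        apply oi.lt_iff_lt.mpr
        exact Fin.mk_lt_mk.mpr (by omega)
  · intro i
    by_cases h1 : (i:ℕ) = 0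
    · simp only [hT, dif_pos h1, hg0]
    by_cases h2 : (i:ℕ) = n
    · have hn0 : ¬ (n = 0) := by omega
      simp only [hT, dif_neg h1, dif_pos h2, hg1]
    · simp only [hT, dif_neg h1, dif_neg h2]
      exact hz _ (oi _).2


set_option maxHeartbeats 2000000 in
lemma main_contra (n : ℕ) (ρ : ℝ) (hρ : 0 < ρ) (g : ℝ → ℝ)
    (hg : ContinuousOn g (Icc 0 1)) (hg0 : g 0 = 0) (hg1 : g 1 = 0)
    (horth : ∀ k : ℕ, 1 ≤ k → k < n →
      ∫ t in (0:ℝ)..1, t ^ ((k:ℝ)*ρ-1) * (1-t) ^ (((n:ℝ)-(k:ℝ))*ρ-1) * g t = 0)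
    (Z : Finset ℝ) (hZsub : ↑Z ⊆ Ioo (0:ℝ) 1)
    (hZall : ∀ x ∈ Ioo (0:ℝ) 1, g x = 0 → x ∈ Z)
    (hZzero : ∀ x ∈ Z, g x = 0)
    (hZcard : Z.card < n - 1) : False := by
  have hn2 : 2 ≤ n := by omega
  set r := Z.card with hr
  set oi := Z.orderIsoOfFin hr.symm with hoi
  -- the partition points
  set e : ℕ → ℝ := fun j => if h : 1 ≤ j ∧ j ≤ r then (oi ⟨j-1, by omega⟩ : ℝ)
    else if j = 0 then 0 else 1 with he
  have he0 : e 0 = 0 := by simp [he]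
  have heR : e (r+1) = 1 := by simp [he]
  have heZ : ∀ j, 1 ≤ j → j ≤ r → e j ∈ Z := by
    intro j h1 h2
    simp only [he, dif_pos (And.intro h1 h2)]
    exact (oi _).2
  have heI : ∀ j, 1 ≤ j → j ≤ r → e j ∈ Ioo (0:ℝ) 1 := fun j h1 h2 => hZsub (heZ j h1 h2)
  have hemono : ∀ i j, i < j → j ≤ r + 1 → e i < e j := by
    intro i j hij hjr
    by_cases hi0 : i = 0
    · rw [hi0, he0]
      by_cases hjr' : j = r + 1
      · rw [hjr', heR]; norm_num
      · exact (heI j (by omega) (by omega)).1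
    · by_cases hjr' : j = r + 1
      · rw [hjr', heR]
        exact (heI i (by omega) (by omega)).2
      · have h1 : 1 ≤ i ∧ i ≤ r := by omega
        have h2 : 1 ≤ j ∧ j ≤ r := by omega
        simp only [he, dif_pos h1, dif_pos h2]
        rw [Subtype.coe_lt_coe]
        apply oi.lt_iff_lt.mpr
        exact Fin.mk_lt_mk.mpr (by omega)
  have heIcc : ∀ j, j ≤ r + 1 → e j ∈ Icc (0:ℝ) 1 := by
    intro j hj
    by_cases h0 : j = 0
    · simp [h0, he0]
    by_cases h1 : j = r + 1
    · simp [h1, heR]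
    · exact ⟨(heI j (by omega) (by omega)).1.le, (heI j (by omega) (by omega)).2.le⟩
  -- no point of Z lies strictly inside an interval
  have hnoZ : ∀ i ≤ r, ∀ x ∈ Z, ¬(e i < x ∧ x < e (i+1)) := by
    intro i hi x hx hcon
    obtain ⟨j, hj⟩ : ∃ j : Fin r, (oi j : ℝ) = x := ⟨oi.symm ⟨x, hx⟩, by simp⟩
    have hxe : x = e (j.1 + 1) := by
      have h1 : 1 ≤ j.1 + 1 ∧ j.1 + 1 ≤ r := by omega
      simp only [he, dif_pos h1]
      rw [← hj]
      congr 1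
    have horder : ∀ a b, a ≤ r + 1 → b ≤ r + 1 → e a < e b → a < b := by
      intro a b ha hb hab
      by_contra hc
      push_neg at hc
      rcases Nat.lt_or_ge b a with h | h
      · exact absurd (hemono b a h ha) (by linarith)
      · have : a = b := by omega
        subst this; exact lt_irrefl _ hab
    have l1 : i < j.1 + 1 := horder i (j.1+1) (by omega) (by omega) (hxe ▸ hcon.1)
    have l2 : j.1 + 1 < i + 1 := horder (j.1+1) i.succ (by omega) (by omega) (hxe ▸ hcon.2)
    omega
  -- cover
  have hcover : ∀ t ∈ Ioo (0:ℝ) 1, t ∉ Z → ∃ i, i ≤ r ∧ e i < t ∧ t < e (i+1) := by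
    intro t ht htZ
    classical
    set i := Nat.findGreatest (fun j => e j < t) r with hi
    have hir : i ≤ r := Nat.findGreatest_le r
    have hit : e i < t := by
      by_cases h0 : i = 0
      · rw [h0, he0]; exact ht.1
      · exact Nat.findGreatest_of_ne_zero hi.symm h0
    refine ⟨i, hir, hit, ?_⟩
    by_cases hiR : i = r
    · rw [hiR, heR]; exact ht.2
    · have hlt : Nat.findGreatest (fun j => e j < t) r < i + 1 := by
        rw [← hi]; omega
      have hnot : ¬ (e (i+1) < t) := Nat.findGreatest_is_greatest hlt (by omega)
      have hne : e (i+1) ≠ t := by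
        intro hcon
        exact htZ (hcon ▸ heZ (i+1) (by omega) (by omega))
      push_neg at hnot
      exact lt_of_le_of_ne hnot hne.symm
  -- midpoints and signs
  set m : ℕ → ℝ := fun i => (e i + e (i+1))/2 with hm
  have hmlt : ∀ i ≤ r, e i < m i ∧ m i < e (i+1) := by
    intro i hi
    have := hemono i (i+1) (by omega) (by omega)
    constructor <;> (simp only [hm]; linarith)
  have hmI : ∀ i ≤ r, m i ∈ Ioo (0:ℝ) 1 := by
    intro i hi
    have h1 := (heIcc i (by omega)).1
    have h2 := (heIcc (i+1) (by omega)).2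
    have := hmlt i hi
    exact ⟨lt_of_le_of_lt h1 this.1, lt_of_lt_of_le this.2 h2⟩
  have hmZ : ∀ i ≤ r, m i ∉ Z := by
    intro i hi hcon
    exact hnoZ i hi (m i) hcon ⟨(hmlt i hi).1, (hmlt i hi).2⟩
  set τ : ℕ → ℝ := fun i => g (m i) with hτ
  have hτne : ∀ i ≤ r, τ i ≠ 0 := by
    intro i hi hcon
    exact hmZ i hi (hZall (m i) (hmI i hi) hcon)
  -- sign constancy on intervals
  have hsign : ∀ i ≤ r, ∀ t, e i < t → t < e (i+1) → 0 < g t * τ i := by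
    intro i hi t h1 h2
    have ht : t ∈ Ioo (0:ℝ) 1 :=
      ⟨lt_of_le_of_lt (heIcc i (by omega)).1 h1, lt_of_lt_of_le h2 (heIcc (i+1) (by omega)).2⟩
    have htZ : t ∉ Z := fun hc => hnoZ i hi t hc ⟨h1, h2⟩
    have hgt : g t ≠ 0 := fun hc => htZ (hZall t ht hc)
    have hτi := hτne i hi
    by_contra hcon
    push_neg at hcon
    have hneg : g t * τ i < 0 := lt_of_le_of_ne hcon (by
      intro hc
      rcases mul_eq_zero.mp hc with h | h
      exacts [hgt h, hτi h])
    have hmi := hmlt i hi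
    have hsub : uIcc t (m i) ⊆ Ioo (e i) (e (i+1)) := by
      rw [uIcc]
      intro x hx
      rcases le_total t (m i) with hh | hh
      · simp only [min_eq_left hh, max_eq_right hh] at hx
        exact ⟨lt_of_lt_of_le h1 hx.1, lt_of_le_of_lt hx.2 hmi.2⟩
      · simp only [min_eq_right hh, max_eq_left hh] at hx
        exact ⟨lt_of_lt_of_le hmi.1 hx.1, lt_of_le_of_lt hx.2 h2⟩
    have hsub2 : Ioo (e i) (e (i+1)) ⊆ Icc (0:ℝ) 1 := by
      intro x hx
      exact ⟨le_trans (heIcc i (by omega)).1 hx.1.le, le_trans hx.2.le (heIcc (i+1) (by omega)).2⟩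
    have hker : (0:ℝ) ∈ uIcc (g t) (g (m i)) := by
      rcases lt_or_ge (g t) 0 with h | h
      · have : 0 < τ i := by nlinarith
        exact mem_uIcc.mpr (Or.inl ⟨h.le, this.le⟩)
      · have hgt' : 0 < g t := lt_of_le_of_ne h (Ne.symm hgt)
        have : τ i < 0 := by nlinarith
        exact mem_uIcc.mpr (Or.inr ⟨this.le, hgt'.le⟩)
    obtain ⟨c, hc1, hc2⟩ := intermediate_value_uIcc (hg.mono (le_trans hsub hsub2)) hker
    have hcI : c ∈ Ioo (e i) (e (i+1)) := hsub hc1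
    have hcI2 : c ∈ Ioo (0:ℝ) 1 :=
      ⟨lt_of_le_of_lt (heIcc i (by omega)).1 hcI.1, lt_of_lt_of_le hcI.2 (heIcc (i+1) (by omega)).2⟩
    exact hnoZ i hi c (hZall c hcI2 hc2) ⟨hcI.1, hcI.2⟩
  -- the substitution map
  set st : ℝ → ℝ := fun t => (t/(1-t))^ρ with hst
  have hstmono : ∀ t₁ ∈ Ioo (0:ℝ) 1, ∀ t₂ ∈ Ioo (0:ℝ) 1, t₁ < t₂ → st t₁ < st t₂ := by
    intro t₁ h₁ t₂ h₂ h12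
    apply Real.rpow_lt_rpow (div_nonneg h₁.1.le (by linarith [h₁.2])) _ hρ
    rw [div_lt_div_iff₀ (by linarith [h₁.2]) (by linarith [h₂.2])]
    nlinarith [h₁.1, h₂.2]
  classical
  set J : Finset ℕ := (Finset.Icc 1 r).filter (fun j => τ (j-1) * τ j < 0) with hJ
  have hJmem : ∀ j ∈ J, 1 ≤ j ∧ j ≤ r ∧ τ (j-1) * τ j < 0 := by
    intro j hj
    simp only [hJ, Finset.mem_filter, Finset.mem_Icc] at hj
    exact ⟨hj.1.1, hj.1.2, hj.2⟩
  have hJnotmem : ∀ j, 1 ≤ j → j ≤ r → j ∉ J → 0 < τ (j-1) * τ j := by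
    intro j h1 h2 hj
    simp only [hJ, Finset.mem_filter, Finset.mem_Icc] at hj
    push_neg at hj
    have h3 := hj ⟨h1, h2⟩
    rcases h3.lt_or_eq with h | h
    · exact h
    · exfalso
      rcases mul_eq_zero.mp h.symm with h' | h'
      · exact hτne (j-1) (by omega) h'
      · exact hτne j h2 h'
  set q : Polynomial ℝ := ∏ j ∈ J, (X - C (st (e j))) with hq
  have hqdeg : q.natDegree = J.card := by
    rw [hq, natDegree_prod]
    · simp [natDegree_X_sub_C]
    · intro j hj
      exact X_sub_C_ne_zero _
  have hcard2 : J.card < n - 1 := by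
    calc J.card ≤ (Finset.Icc 1 r).card := Finset.card_filter_le _ _
      _ = r := by simp
      _ < n - 1 := hZcard
  set N : ℕ → ℕ := fun i => (J.filter (fun j => ¬ j ≤ i)).card with hN
  -- sign of q on intervals
  have hqsign : ∀ i ≤ r, ∀ t, e i < t → t < e (i+1) → t ∈ Ioo (0:ℝ) 1 →
      0 < q.eval (st t) * (-1)^(N i) := by
    intro i hi t h1 h2 ht
    have hev : q.eval (st t) = ∏ j ∈ J, (st t - st (e j)) := by
      rw [hq, eval_prod]
      apply Finset.prod_congr rfl
      intro j hj
      simp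
    have hsplitJ := Finset.prod_filter_mul_prod_filter_not J (fun j => j ≤ i)
      (fun j => st t - st (e j))
    have hP1 : 0 < ∏ j ∈ J.filter (fun j => j ≤ i), (st t - st (e j)) := by
      apply Finset.prod_pos
      intro j hj
      rw [Finset.mem_filter] at hj
      obtain ⟨hj1, hj2, _⟩ := hJmem j hj.1
      have hje : e j ≤ e i := by
        rcases Nat.lt_or_ge j i with h | h
        · exact (hemono j i h (by omega)).le
        · have : j = i := by omega
          rw [this]
      have hjt : e j < t := lt_of_le_of_lt hje h1
      have : st (e j) < st t := hstmono (e j) (heI j hj1 hj2) t ht hjt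
      linarith
    have hQ2 : 0 < ∏ j ∈ J.filter (fun j => ¬ j ≤ i), (st (e j) - st t) := by
      apply Finset.prod_pos
      intro j hj
      rw [Finset.mem_filter] at hj
      obtain ⟨hj1, hj2, _⟩ := hJmem j hj.1
      have hij : i + 1 ≤ j := by omega
      have hje : e (i+1) ≤ e j := by
        rcases Nat.lt_or_ge (i+1) j with h | h
        · exact (hemono (i+1) j h (by omega)).le
        · have : i + 1 = j := by omega
          rw [this]
      have hjt : t < e j := lt_of_lt_of_le h2 hje
      have : st t < st (e j) := hstmono t ht (e j) (heI j hj1 hj2) hjt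
      linarith
    have hP2 : ∏ j ∈ J.filter (fun j => ¬ j ≤ i), (st t - st (e j))
        = (-1)^(N i) * ∏ j ∈ J.filter (fun j => ¬ j ≤ i), (st (e j) - st t) := by
      calc ∏ j ∈ J.filter (fun j => ¬ j ≤ i), (st t - st (e j))
          = ∏ j ∈ J.filter (fun j => ¬ j ≤ i), ((-1) * (st (e j) - st t)) :=
            Finset.prod_congr rfl (by intros; ring)
        _ = (∏ _j ∈ J.filter (fun j => ¬ j ≤ i), (-1:ℝ)) *
            ∏ j ∈ J.filter (fun j => ¬ j ≤ i), (st (e j) - st t) := Finset.prod_mul_distrib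
        _ = (-1)^(N i) * ∏ j ∈ J.filter (fun j => ¬ j ≤ i), (st (e j) - st t) := by
            rw [Finset.prod_const, hN]
    have hsq : ((-1:ℝ))^(N i) * (-1)^(N i) = 1 := by
      rw [← pow_add]
      exact Even.neg_one_pow ⟨N i, by ring⟩
    have hfinal : q.eval (st t) * (-1)^(N i)
        = (∏ j ∈ J.filter (fun j => j ≤ i), (st t - st (e j))) *
          (∏ j ∈ J.filter (fun j => ¬ j ≤ i), (st (e j) - st t)) := by
      calc q.eval (st t) * (-1)^(N i)
          = ((∏ j ∈ J.filter (fun j => j ≤ i), (st t - st (e j))) *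
            ((-1)^(N i) * ∏ j ∈ J.filter (fun j => ¬ j ≤ i), (st (e j) - st t))) * (-1)^(N i) := by
            rw [hev, ← hsplitJ, hP2]
        _ = ((∏ j ∈ J.filter (fun j => j ≤ i), (st t - st (e j))) *
            (∏ j ∈ J.filter (fun j => ¬ j ≤ i), (st (e j) - st t))) *
            ((-1)^(N i) * (-1)^(N i)) := by ring
        _ = (∏ j ∈ J.filter (fun j => j ≤ i), (st t - st (e j))) *
            (∏ j ∈ J.filter (fun j => ¬ j ≤ i), (st (e j) - st t)) := by rw [hsq, mul_one]
    rw [hfinal]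
    exact mul_pos hP1 hQ2
  -- sign of τ
  have hNrel : ∀ i, N i = N (i+1) + (if (i+1) ∈ J then 1 else 0) := by
    intro i
    have hset : J.filter (fun j => ¬ j ≤ i)
        = (J.filter (fun j => ¬ j ≤ i+1)) ∪ (J.filter (fun j => j = i+1)) := by
      ext j
      simp only [Finset.mem_filter, Finset.mem_union]
      constructor
      · rintro ⟨hj, hij⟩
        by_cases h : j = i+1
        · exact Or.inr ⟨hj, h⟩
        · exact Or.inl ⟨hj, by omega⟩
      · rintro (⟨hj, hij⟩ | ⟨hj, hij⟩)
        · exact ⟨hj, by omega⟩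
        · exact ⟨hj, by omega⟩
    have hdisj : Disjoint (J.filter (fun j => ¬ j ≤ i+1)) (J.filter (fun j => j = i+1)) := by
      rw [Finset.disjoint_left]
      intro j h1 h2
      simp only [Finset.mem_filter] at h1 h2
      omega
    rw [hN]
    simp only
    rw [hset, Finset.card_union_of_disjoint hdisj, Finset.filter_eq']
    congr 1
    split_ifs <;> simp
  have hτsign : ∀ d i, i + d = r → 0 < τ i * τ r * (-1)^(N i) := by
    intro d
    induction d with
    | zero =>
      intro i hi
      have hNr : N i = 0 := by
        rw [hN]
        rw [Finset.card_eq_zero, Finset.filter_eq_empty_iff]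
        intro j hj
        have := hJmem j hj
        omega
      have hir : i = r := by omega
      rw [hNr, pow_zero, mul_one, hir]
      exact mul_self_pos.mpr (hτne r le_rfl)
    | succ d ih =>
      intro i hi
      have IH := ih (i+1) (by omega)
      have hrel := hNrel i
      have hτi2 : 0 < τ (i+1) * τ (i+1) := mul_self_pos.mpr (hτne (i+1) (by omega))
      by_cases hmem : (i+1) ∈ J
      · have hAB : τ i * τ (i+1) < 0 := by
          have := (hJmem (i+1) hmem).2.2
          simpa using this
        have hNi : N i = N (i+1) + 1 := by rw [hrel, if_pos hmem]
        have hprod : (τ i * τ (i+1)) * (τ (i+1) * τ r * (-1)^(N (i+1))) < 0 :=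
          mul_neg_of_neg_of_pos hAB IH
        set sN := ((-1:ℝ))^(N (i+1)) with hsN
        have hkey : (τ i * τ (i+1)) * (τ (i+1) * τ r * sN)
            = (τ i * τ r * sN) * (τ (i+1) * τ (i+1)) := by ring
        have hneg : τ i * τ r * sN < 0 := by nlinarith
        rw [hNi, pow_succ, ← hsN]
        have hgoal : τ i * τ r * (sN * -1) = -(τ i * τ r * sN) := by ring
        rw [hgoal]
        linarith
      · have hAB : 0 < τ i * τ (i+1) := by
          have := hJnotmem (i+1) (by omega) (by omega) hmem
          simpa using this
        have hNi : N i = N (i+1) := by rw [hrel, if_neg hmem, Nat.add_zero]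
        have hprod : 0 < (τ i * τ (i+1)) * (τ (i+1) * τ r * (-1)^(N (i+1))) :=
          mul_pos hAB IH
        set sN := ((-1:ℝ))^(N (i+1)) with hsN
        have hkey : (τ i * τ (i+1)) * (τ (i+1) * τ r * sN)
            = (τ i * τ r * sN) * (τ (i+1) * τ (i+1)) := by ring
        rw [hNi, ← hsN]
        nlinarith
  -- combined positivity
  have hposint : ∀ t ∈ Ioo (0:ℝ) 1, t ∉ Z → 0 < (τ r * q.eval (st t)) * g t := by
    intro t ht htZ
    obtain ⟨i, hir, h1, h2⟩ := hcover t ht htZ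
    have A := hqsign i hir t h1 h2 ht
    have B := hτsign (r - i) i (by omega)
    have C := hsign i hir t h1 h2
    have hsq : ((-1:ℝ))^(N i) * (-1)^(N i) = 1 := by
      rw [← pow_add]
      exact Even.neg_one_pow ⟨N i, by ring⟩
    have key : (q.eval (st t) * (-1)^(N i)) * (τ i * τ r * (-1)^(N i))
        = (q.eval (st t) * (τ i * τ r)) * ((-1:ℝ)^(N i) * (-1)^(N i)) := by ring
    have AB : 0 < q.eval (st t) * (τ i * τ r) := by
      have h := mul_pos A B
      rw [key, hsq, mul_one] at h
      exact h
    have hτi2 : 0 < τ i * τ i := mul_self_pos.mpr (hτne i hir)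
    have h3 : ((τ r * q.eval (st t)) * g t) * (τ i * τ i)
        = (q.eval (st t) * (τ i * τ r)) * (g t * τ i) := by ring
    have h5 : 0 < (q.eval (st t) * (τ i * τ r)) * (g t * τ i) := mul_pos AB C
    rw [← h3] at h5
    by_contra hcon
    push_neg at hcon
    nlinarith [h5, hcon, hτi2]
  -- weight base and the contradiction integrand
  set wb : ℝ → ℝ := fun t => t^(ρ-1) * (1-t)^(((n:ℝ)-1)*ρ-1) with hwb
  have hwbpos : ∀ t ∈ Ioo (0:ℝ) 1, 0 < wb t := by
    intro t ht
    exact mul_pos (Real.rpow_pos_of_pos ht.1 _) (Real.rpow_pos_of_pos (by linarith [ht.2]) _)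
  set G : ℝ → ℝ := fun t => wb t * ((τ r * q.eval (st t)) * g t) with hG
  have hGpos : ∀ t ∈ Ioo (0:ℝ) 1, t ∉ Z → 0 < G t := by
    intro t ht htZ
    exact mul_pos (hwbpos t ht) (hposint t ht htZ)
  have hGnonneg : ∀ t ∈ Icc (0:ℝ) 1, 0 ≤ G t := by
    intro t ht
    rcases eq_or_lt_of_le ht.1 with h0 | h0
    · simp [hG, ← h0, hg0]
    rcases eq_or_lt_of_le ht.2 with h1 | h1
    · simp [hG, h1, hg1]
    by_cases htZ : t ∈ Z
    · simp [hG, hZzero t htZ]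
    · exact (hGpos t ⟨h0, h1⟩ htZ).le
  -- the rpow identity
  have hpow : ∀ t ∈ Ioo (0:ℝ) 1, ∀ d : ℕ,
      wb t * (st t)^d = t^((((d:ℝ)+1))*ρ-1) * (1-t)^(((n:ℝ)-((d:ℝ)+1))*ρ-1) := by
    intro t ht d
    have ht0 : (0:ℝ) < t := ht.1
    have ht1 : (0:ℝ) < 1 - t := by linarith [ht.2]
    have e1 : (st t)^d = t^(ρ*(d:ℝ)) / (1-t)^(ρ*(d:ℝ)) := by
      rw [hst]
      simp only
      rw [← Real.rpow_natCast ((t/(1-t))^ρ) d, ← Real.rpow_mul (by positivity),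
        Real.div_rpow ht0.le ht1.le]
    rw [hwb]
    simp only
    rw [e1, div_eq_mul_inv, ← Real.rpow_neg ht1.le]
    rw [show t^(ρ-1) * (1-t)^(((n:ℝ)-1)*ρ-1) * (t^(ρ*(d:ℝ)) * (1-t)^(-(ρ*(d:ℝ))))
        = (t^(ρ-1) * t^(ρ*(d:ℝ))) * ((1-t)^(((n:ℝ)-1)*ρ-1) * (1-t)^(-(ρ*(d:ℝ)))) from by ring]
    rw [← Real.rpow_add ht0, ← Real.rpow_add ht1]
    congr 1 <;> congr 1 <;> ring
  -- the expanded integrand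
  set Fd : ℕ → ℝ → ℝ := fun d t =>
      (τ r * q.coeff d) * (t^(((d:ℝ)+1)*ρ-1) * (1-t)^(((n:ℝ)-((d:ℝ)+1))*ρ-1) * g t) with hFd
  set H : ℝ → ℝ := fun t => ∑ d ∈ Finset.range (n-1), Fd d t with hH
  have hdeglt : q.natDegree < n - 1 := by rw [hqdeg]; exact hcard2
  have hGH : ∀ t ∈ Ioo (0:ℝ) 1, G t = H t := by
    intro t ht
    have hev := Polynomial.eval_eq_sum_range' hdeglt (st t)
    rw [hG, hH]
    simp only [hFd]
    rw [hev, Finset.mul_sum, Finset.sum_mul, Finset.mul_sum]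
    apply Finset.sum_congr rfl
    intro d hd
    have := hpow t ht d
    calc wb t * (τ r * (q.coeff d * st t ^ d) * g t)
        = (τ r * q.coeff d) * ((wb t * st t ^ d) * g t) := by ring
      _ = (τ r * q.coeff d) * (t^(((d:ℝ)+1)*ρ-1) * (1-t)^(((n:ℝ)-((d:ℝ)+1))*ρ-1) * g t) := by
          rw [this]
  have hterm : ∀ d ∈ Finset.range (n-1), IntervalIntegrable (Fd d) volume 0 1 := by
    intro d hd
    rw [hFd]
    simp only
    rw [Finset.mem_range] at hd
    have ha : (0:ℝ) < ((d:ℝ)+1)*ρ := by positivity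
    have hb : (0:ℝ) < ((n:ℝ)-((d:ℝ)+1))*ρ := by
      apply mul_pos _ hρ
      have : (d:ℝ) + 1 < (n:ℝ) := by
        have : (d:ℕ) + 1 < n := by omega
        exact_mod_cast this
      linarith
    exact (aux_mul_integrable ha hb hg).const_mul _
  have hHint : IntervalIntegrable H volume 0 1 := by
    have heq : H = ∑ d ∈ Finset.range (n-1), Fd d := by
      funext t
      rw [hH, Finset.sum_apply]
    rw [heq]
    exact IntervalIntegrable.sum _ hterm
  have hHzero : ∫ t in (0:ℝ)..1, H t = 0 := by
    rw [hH]
    rw [intervalIntegral.integral_finset_sum hterm]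
    apply Finset.sum_eq_zero
    intro d hd
    rw [Finset.mem_range] at hd
    rw [hFd]
    simp only
    rw [intervalIntegral.integral_const_mul]
    have horth' := horth (d+1) (by omega) (by omega)
    push_cast at horth'
    rw [horth', mul_zero]
  have hae : ∀ᵐ x ∂(volume : Measure ℝ), x ∈ Set.uIoc (0:ℝ) 1 → G x = H x := by
    have h1 : ∀ᵐ (x:ℝ) ∂(volume : Measure ℝ), x ≠ 1 := by
      rw [MeasureTheory.ae_iff]
      simp only [ne_eq, not_not]
      rw [show {a : ℝ | a = 1} = {1} from rfl]
      exact Real.volume_singleton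
    filter_upwards [h1] with x hx hxI
    rw [Set.uIoc_of_le (by norm_num : (0:ℝ) ≤ 1)] at hxI
    exact hGH x ⟨hxI.1, lt_of_le_of_ne hxI.2 hx⟩
  have hGint : IntervalIntegrable G volume 0 1 := by
    rw [intervalIntegrable_iff] at hHint ⊢
    apply hHint.congr
    filter_upwards [hae.filter_mono (MeasureTheory.ae_mono Measure.restrict_le_self),
      ae_restrict_mem measurableSet_uIoc] with x h1 h2
    exact (h1 h2).symm
  have hGzero : ∫ t in (0:ℝ)..1, G t = 0 := by
    rw [intervalIntegral.integral_congr_ae hae]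
    exact hHzero
  -- now derive a contradiction
  have he1pos : 0 < e 1 := by
    have := hemono 0 1 (by omega) (by omega)
    rwa [he0] at this
  have he1le : e 1 ≤ 1 := (heIcc 1 (by omega)).2
  set a : ℝ := e 1 / 4 with ha
  set b : ℝ := e 1 / 2 with hb
  have hab : a < b := by rw [ha, hb]; linarith
  have ha0 : 0 < a := by rw [ha]; linarith
  have hb1 : b < 1 := by rw [hb]; linarith
  have hsubI : ∀ x, a < x → x < b → (x ∈ Ioo (0:ℝ) 1 ∧ x ∉ Z) := by
    intro x h1 h2
    have hx1 : x < e 1 := by rw [hb] at h2; linarith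
    have hx0 : 0 < x := lt_trans ha0 h1
    have hxI : x ∈ Ioo (0:ℝ) 1 := ⟨hx0, lt_of_lt_of_le hx1 he1le⟩
    refine ⟨hxI, fun hc => ?_⟩
    exact hnoZ 0 (by omega) x hc ⟨by rwa [he0], hx1⟩
  have hi1 : IntervalIntegrable G volume 0 a := by
    apply hGint.mono_set
    rw [uIcc_of_le ha0.le, uIcc_of_le (by norm_num : (0:ℝ) ≤ 1)]
    exact Icc_subset_Icc le_rfl (by linarith)
  have hi2 : IntervalIntegrable G volume a b := by
    apply hGint.mono_set
    rw [uIcc_of_le hab.le, uIcc_of_le (by norm_num : (0:ℝ) ≤ 1)]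
    exact Icc_subset_Icc ha0.le (by linarith)
  have hi3 : IntervalIntegrable G volume b 1 := by
    apply hGint.mono_set
    rw [uIcc_of_le hb1.le, uIcc_of_le (by norm_num : (0:ℝ) ≤ 1)]
    exact Icc_subset_Icc (by linarith) le_rfl
  have hsplit : (∫ t in (0:ℝ)..a, G t) + (∫ t in a..b, G t) + (∫ t in b..(1:ℝ), G t)
      = ∫ t in (0:ℝ)..1, G t := by
    rw [intervalIntegral.integral_add_adjacent_intervals hi1 hi2,
      intervalIntegral.integral_add_adjacent_intervals (hi1.trans hi2) hi3]
  have h0a : 0 ≤ ∫ t in (0:ℝ)..a, G t := by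
    apply intervalIntegral.integral_nonneg ha0.le
    intro u hu
    exact hGnonneg u ⟨hu.1, le_trans hu.2 (by linarith)⟩
  have hb1' : 0 ≤ ∫ t in b..(1:ℝ), G t := by
    apply intervalIntegral.integral_nonneg hb1.le
    intro u hu
    exact hGnonneg u ⟨le_trans (by linarith) hu.1, hu.2⟩
  have habpos : 0 < ∫ t in a..b, G t := by
    apply intervalIntegral_pos_of_pos_on hi2 _ hab
    intro x hx
    obtain ⟨hxI, hxZ⟩ := hsubI x hx.1 hx.2
    exact hGpos x hxI hxZ
  rw [hGzero] at hsplit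
  linarith

lemma key_aux (n : ℕ) (hn : 1 ≤ n) (ρ : ℝ) (hρ : 0 < ρ) (g : ℝ → ℝ)
    (hg : ContinuousOn g (Icc 0 1)) (hg0 : g 0 = 0) (hg1 : g 1 = 0)
    (horth : ∀ k : ℕ, 1 ≤ k → k < n →
      ∫ t in (0:ℝ)..1, t ^ ((k:ℝ)*ρ-1) * (1-t) ^ (((n:ℝ)-(k:ℝ))*ρ-1) * g t = 0) :
    ∃ t : Fin (n+1) → ℝ, StrictMono t ∧ t 0 = 0 ∧ t (Fin.last n) = 1 ∧ ∀ i, g (t i) = 0 := by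
  classical
  set Zs : Set ℝ := {x | x ∈ Ioo (0:ℝ) 1 ∧ g x = 0} with hZs
  by_cases hex : ∃ s : Finset ℝ, ↑s ⊆ Zs ∧ s.card = n - 1
  · obtain ⟨s, hs1, hs2⟩ := hex
    exact assemble n hn g hg0 hg1 s (fun x hx => (hs1 hx).1) hs2 (fun x hx => (hs1 hx).2)
  · exfalso
    have hfin : Zs.Finite := by
      by_contra hinf
      obtain ⟨t, ht1, ht2⟩ := Set.Infinite.exists_subset_card_eq (hinf) (n-1)
      exact hex ⟨t, ht1, ht2⟩
    have hcard : hfin.toFinset.card < n - 1 := by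
      by_contra hc
      push_neg at hc
      obtain ⟨t, ht1, ht2⟩ := Finset.exists_subset_card_eq hc
      refine hex ⟨t, ?_, ht2⟩
      intro x hx
      have := ht1 hx
      rwa [Set.Finite.mem_toFinset] at this
    apply main_contra n ρ hρ g hg hg0 hg1 horth hfin.toFinset ?_ ?_ ?_ hcard
    · intro x hx
      rw [Finset.mem_coe, Set.Finite.mem_toFinset] at hx
      exact hx.1
    · intro x hx hgx
      rw [Set.Finite.mem_toFinset]
      exact ⟨hx, hgx⟩
    · intro x hx
      rw [Set.Finite.mem_toFinset] at hx
      exact hx.2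

end aux

/-- For `n ≥ 1`, `ρ > 0` and continuous `f : [0,1] → ℝ`, there exist points
`0 = t₀ < t₁ < … < t_n = 1` at which `f − L_n^ρ f` vanishes. -/
theorem remainder_has_roots (n : ℕ) (hn : 1 ≤ n) (ρ : ℝ) (hρ : 0 < ρ)
    (f : ℝ → ℝ) (hf : ContinuousOn f (Set.Icc 0 1))
    (L : Polynomial ℝ) (hLdeg : L.natDegree ≤ n)
    (hL : ∀ k ≤ n, Ffun n k ρ (fun x => L.eval x) = Ffun n k ρ f) :
    ∃ t : Fin (n + 1) → ℝ, StrictMono t ∧ t 0 = 0 ∧ t (Fin.last n) = 1 ∧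
      ∀ i, f (t i) - L.eval (t i) = 0 := by
  set g : ℝ → ℝ := fun x => f x - L.eval x with hgdef
  have hg : ContinuousOn g (Icc 0 1) := hf.sub (L.continuous.continuousOn)
  have hg0 : g 0 = 0 := by
    have h := hL 0 (by omega)
    simp [Ffun] at h
    rw [hgdef]
    simp only
    rw [h, sub_self]
  have hg1 : g 1 = 0 := by
    have h := hL n le_rfl
    have hn0 : n ≠ 0 := by omega
    simp [Ffun, hn0] at h
    rw [hgdef]
    simp only
    rw [h, sub_self]
  have horth : ∀ k : ℕ, 1 ≤ k → k < n →
      ∫ t in (0:ℝ)..1, t ^ ((k:ℝ)*ρ-1) * (1-t) ^ (((n:ℝ)-(k:ℝ))*ρ-1) * g t = 0 := by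
    intro k h1 h2
    exact aux_orth n ρ hρ f hf L hL k h1 h2
  exact key_aux n hn ρ hρ g hg hg0 hg1 horth
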